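/- Every hermitian projection P on a complex Banach space satisfies ‖P - (1/2)I‖ ≤ 1/2; in particular ‖P‖ ≤ 1, so every hermitian projection is an orthoprojection. -/

import Mathlib

open Nat in
lemma exp_smul_idem {X : Type*} [NormedAddCommGroup X] [NormedSpace ℂ X] [CompleteSpace X]
    (P : X →L[ℂ] X) (hP : P * P = P) (c : ℂ) :
    NormedSpace.exp (c • P) = 1 + (Complex.exp c - 1) • P := by
  have hpow : ∀ n : ℕ, P ^ (n + 1) = P := by
    intro n
    induction n with
    | zero => simp
    | succ k ih => rw [pow_succ, ih, hP]
  have hsum1 : Summable fun n : ℕ => ((n ! : ℂ))⁻¹ • (c • P) ^ n :=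
    NormedSpace.expSeries_summable' (𝕂 := ℂ) (c • P)
  have hsumc : Summable fun n : ℕ => ((n ! : ℂ))⁻¹ • c ^ n :=
    NormedSpace.expSeries_summable' (𝕂 := ℂ) c
  have hsumc' : Summable fun n : ℕ => (((n + 1)! : ℂ))⁻¹ * c ^ (n + 1) := by
    have := (summable_nat_add_iff 1).mpr hsumc
    simpa [smul_eq_mul] using this
  have hexpc : Complex.exp c = 1 + ∑' n : ℕ, (((n + 1)! : ℂ))⁻¹ * c ^ (n + 1) := by
    rw [Complex.exp_eq_exp_ℂ, NormedSpace.exp_eq_tsum ℂ]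
    beta_reduce
    rw [Summable.tsum_eq_zero_add hsumc]
    simp [smul_eq_mul]
  rw [NormedSpace.exp_eq_tsum ℂ]
  beta_reduce
  rw [Summable.tsum_eq_zero_add hsum1]
  have hterm : ∀ n : ℕ, (((n + 1)! : ℂ))⁻¹ • (c • P) ^ (n + 1)
      = ((((n + 1)! : ℂ))⁻¹ * c ^ (n + 1)) • P := by
    intro n
    rw [smul_pow, hpow, smul_smul]
  simp only [hterm]
  rw [Summable.tsum_smul_const hsumc']
  rw [hexpc]
  simp [add_sub_cancel_left]

theorem stmt9 {X : Type*} [NormedAddCommGroup X] [NormedSpace ℂ X] [CompleteSpace X]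
    (P : X →L[ℂ] X) (hP : P * P = P)
    (hherm : ∀ t : ℝ, ‖NormedSpace.exp ((Complex.I * t) • P)‖ = 1) :
    ‖P - ((1 / 2 : ℝ) : ℂ) • (1 : X →L[ℂ] X)‖ ≤ 1 / 2 ∧ ‖P‖ ≤ 1 := by
  have hpi := hherm Real.pi
  rw [exp_smul_idem P hP] at hpi
  have hec : Complex.exp (Complex.I * (Real.pi : ℂ)) = -1 := by
    rw [mul_comm]; exact Complex.exp_pi_mul_I
  rw [hec] at hpi
  have heq : P - ((1 / 2 : ℝ) : ℂ) • (1 : X →L[ℂ] X)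
      = (-(1 / 2 : ℂ)) • (1 + ((-1 : ℂ) - 1) • P) := by
    push_cast
    rw [smul_add, smul_smul]
    module
  have h1 : ‖P - ((1 / 2 : ℝ) : ℂ) • (1 : X →L[ℂ] X)‖ ≤ 1 / 2 := by
    rw [heq, norm_smul (-(1 / 2 : ℂ)) (1 + ((-1 : ℂ) - 1) • P), hpi]
    simp
  refine ⟨h1, ?_⟩
  have h2 : ‖((1 / 2 : ℝ) : ℂ) • (1 : X →L[ℂ] X)‖ ≤ 1 / 2 := by
    rw [norm_smul ((1 / 2 : ℝ) : ℂ) (1 : X →L[ℂ] X)]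
    have hid : ‖(1 : X →L[ℂ] X)‖ ≤ 1 := by
      simpa [ContinuousLinearMap.one_def] using ContinuousLinearMap.norm_id_le (E := X)
    calc ‖((1 / 2 : ℝ) : ℂ)‖ * ‖(1 : X →L[ℂ] X)‖ ≤ (1/2) * 1 := by
          apply mul_le_mul _ hid (norm_nonneg _) (by norm_num)
          simp
      _ = 1 / 2 := by norm_num
  calc ‖P‖ = ‖(P - ((1 / 2 : ℝ) : ℂ) • (1 : X →L[ℂ] X)) + ((1 / 2 : ℝ) : ℂ) • (1 : X →L[ℂ] X)‖ := by
        rw [sub_add_cancel]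
    _ ≤ _ := norm_add_le _ _
    _ ≤ 1/2 + 1/2 := add_le_add h1 h2
    _ = 1 := by norm_num
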